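/- Let (v_n) be an ℕ^d-indexed sequence in a Banach space V such that the multiparameter Cesàro limit v = lim_{l(N)→∞} (1/w(N)) ∑_{n ≤ N} v_n exists, and suppose there is α > 0 such that for every n = (n_1,…,n_d) ∈ ℕ^d and every i, ‖v_{n+e_i} − v_n‖ < α/n_i. Then lim_{l(n)→∞} v_n = v. -/

import Mathlib

open Filter Topology Finset

lemma var_aux {V : Type*} [NormedAddCommGroup V] [NormedSpace ℝ V] {d : ℕ}
    (v : (Fin d → ℕ) → V) (α : ℝ) (hα : 0 < α)
    (hdiff : ∀ n : Fin d → ℕ, (∀ i, 1 ≤ n i) → ∀ i,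
      ‖v (Function.update n i (n i + 1)) - v n‖ < α / n i) :
    ∀ k (n m : Fin d → ℕ), (∀ i, 1 ≤ n i) → (∀ i, n i ≤ m i) →
      (∑ i, (m i - n i)) = k →
      ‖v m - v n‖ ≤ α * ∑ i, ((m i - n i : ℕ) : ℝ) / n i := by
  intro k
  induction k with
  | zero =>
    intro n m h1 hle hsum
    have hz : ∀ i, m i - n i = 0 := by
      intro i
      have := Finset.sum_eq_zero_iff.mp hsum i (mem_univ i)
      exact this
    have hmn : m = n := funext fun i => le_antisymm (Nat.le_of_sub_eq_zero (hz i)) (hle i)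
    subst hmn
    simp [hz]
  | succ k ih =>
    intro n m h1 hle hsum
    have hex : ∃ i, n i < m i := by
      by_contra h
      push_neg at h
      have : ∀ i ∈ (univ : Finset (Fin d)), m i - n i = 0 := fun i _ => Nat.sub_eq_zero_of_le (h i)
      rw [Finset.sum_eq_zero this] at hsum
      exact Nat.succ_ne_zero k hsum.symm
    obtain ⟨i, hi⟩ := hex
    set m' := Function.update m i (m i - 1) with hm'
    have hm'i : m' i = m i - 1 := Function.update_self i _ m
    have hm'j : ∀ j, j ≠ i → m' j = m j := fun j hj => Function.update_of_ne hj _ m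
    have hm'le : ∀ j, n j ≤ m' j := by
      intro j
      rcases eq_or_ne j i with rfl | hj
      · rw [hm'i]; omega
      · rw [hm'j j hj]; exact hle j
    have h1m' : ∀ j, 1 ≤ m' j := fun j => le_trans (h1 j) (hm'le j)
    have hupd : Function.update m' i (m' i + 1) = m := by
      rw [hm'i]
      have h2 : m i - 1 + 1 = m i := by omega
      rw [hm', Function.update_idem, h2, Function.update_eq_self]
    have hsum' : (∑ j, (m' j - n j)) = k := by
      have e1 : ∑ j, (m j - n j) = (m i - n i) + ∑ j ∈ univ.erase i, (m j - n j) :=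
        (Finset.add_sum_erase _ _ (mem_univ i)).symm
      have e2 : ∑ j, (m' j - n j) = (m' i - n i) + ∑ j ∈ univ.erase i, (m' j - n j) :=
        (Finset.add_sum_erase _ _ (mem_univ i)).symm
      have e3 : ∑ j ∈ univ.erase i, (m' j - n j) = ∑ j ∈ univ.erase i, (m j - n j) :=
        Finset.sum_congr rfl fun j hj => by rw [hm'j j (Finset.mem_erase.mp hj).1]
      rw [e2, e3, hm'i]
      rw [e1] at hsum
      omega
    have key : ‖v m - v m'‖ ≤ α / n i := by
      have h := hdiff m' h1m' i
      rw [hupd] at h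
      refine le_trans h.le ?_
      apply div_le_div_of_nonneg_left hα.le
      · exact_mod_cast h1 i
      · exact_mod_cast hm'le i
    have ihm := ih n m' h1 hm'le hsum'
    have tri : ‖v m - v n‖ ≤ ‖v m - v m'‖ + ‖v m' - v n‖ := norm_sub_le_norm_sub_add_norm_sub _ _ _
    have rhs : α * ∑ j, ((m j - n j : ℕ) : ℝ) / n j
        = α / n i + α * ∑ j, ((m' j - n j : ℕ) : ℝ) / n j := by
      have e1 : ∑ j, ((m j - n j : ℕ) : ℝ) / n j
          = ((m i - n i : ℕ) : ℝ) / n i + ∑ j ∈ univ.erase i, ((m j - n j : ℕ) : ℝ) / n j :=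
        (Finset.add_sum_erase _ _ (mem_univ i)).symm
      have e2 : ∑ j, ((m' j - n j : ℕ) : ℝ) / n j
          = ((m' i - n i : ℕ) : ℝ) / n i + ∑ j ∈ univ.erase i, ((m' j - n j : ℕ) : ℝ) / n j :=
        (Finset.add_sum_erase _ _ (mem_univ i)).symm
      have e3 : ∑ j ∈ univ.erase i, ((m' j - n j : ℕ) : ℝ) / n j
          = ∑ j ∈ univ.erase i, ((m j - n j : ℕ) : ℝ) / n j :=
        Finset.sum_congr rfl fun j hj => by rw [hm'j j (Finset.mem_erase.mp hj).1]
      have e4 : ((m i - n i : ℕ) : ℝ) = ((m' i - n i : ℕ) : ℝ) + 1 := by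
        rw [hm'i]
        have : m i - n i = (m i - 1 - n i) + 1 := by omega
        rw [this]
        push_cast
        ring
      rw [e1, e2, e3, e4]
      ring
    rw [rhs]
    calc ‖v m - v n‖ ≤ ‖v m - v m'‖ + ‖v m' - v n‖ := tri
      _ ≤ α / n i + α * ∑ j, ((m' j - n j : ℕ) : ℝ) / n j := add_le_add key ihm

lemma indicator_sum {V : Type*} [AddCommGroup V] [Module ℝ V] {d : ℕ}
    (f : (Fin d → ℕ) → V) (U : Finset (Fin d → ℕ)) (P : (Fin d → ℕ) → Prop)
    [DecidablePred P] (T : Finset (Fin d → ℕ)) (hT : T = U.filter P) :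
    ∑ m ∈ T, f m = ∑ m ∈ U, (if P m then (1:ℝ) else 0) • f m := by
  rw [hT, Finset.sum_filter]
  congr 1
  ext m
  split <;> simp

lemma incl_excl {V : Type*} [AddCommGroup V] [Module ℝ V] {d : ℕ}
    (f : (Fin d → ℕ) → V) (a b : Fin d → ℕ) (h1 : ∀ i, 1 ≤ a i) (hab : ∀ i, a i ≤ b i) :
    ∑ m ∈ Finset.Icc (fun i => a i + 1) b, f m
      = ∑ S ∈ (univ : Finset (Fin d)).powerset,
          (-1 : ℝ) ^ S.card •
            ∑ m ∈ Finset.Icc 1 (fun i => if i ∈ S then a i else b i), f m := by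
  classical
  set U : Finset (Fin d → ℕ) := Finset.Icc 1 b with hU
  set ψ : Fin d → (Fin d → ℕ) → ℝ := fun i m => if m i ≤ a i then 1 else 0 with hψ
  -- Step 1
  have step1 : ∀ S : Finset (Fin d),
      ∑ m ∈ Finset.Icc 1 (fun i => if i ∈ S then a i else b i), f m
        = ∑ m ∈ U, (∏ i ∈ S, ψ i m) • f m := by
    intro S
    have hps : ∀ m, (∏ i ∈ S, ψ i m) = if (∀ i ∈ S, m i ≤ a i) then (1:ℝ) else 0 := by
      intro m
      split
      · next h => exact Finset.prod_eq_one fun i hi => by simp [hψ, h i hi]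
      · next h =>
        push_neg at h
        obtain ⟨i, hi, hgt⟩ := h
        exact Finset.prod_eq_zero hi (by simp [hψ, hgt])
    have hfilter : Finset.Icc (1 : Fin d → ℕ) (fun i => if i ∈ S then a i else b i)
        = U.filter (fun m => ∀ i ∈ S, m i ≤ a i) := by
      ext m
      simp only [Finset.mem_Icc, Finset.mem_filter, hU, Pi.le_def]
      constructor
      · rintro ⟨hl, hr⟩
        refine ⟨⟨hl, fun i => ?_⟩, fun i hi => ?_⟩
        · rcases em (i ∈ S) with h | h
          · exact le_trans (by simpa [h] using hr i) (hab i)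
          · simpa [h] using hr i
        · simpa [hi] using hr i
      · rintro ⟨⟨hl, hr⟩, hP⟩
        refine ⟨hl, fun i => ?_⟩
        rcases em (i ∈ S) with h | h
        · simpa [h] using hP i h
        · simpa [h] using hr i
    rw [indicator_sum f U _ _ hfilter]
    exact Finset.sum_congr rfl fun m _ => by rw [hps m]
  -- Step 2
  have step2 : ∑ m ∈ Finset.Icc (fun i => a i + 1) b, f m
      = ∑ m ∈ U, (∏ i, (1 - ψ i m)) • f m := by
    have hps : ∀ m, (∏ i, (1 - ψ i m)) = if (∀ i, a i + 1 ≤ m i) then (1:ℝ) else 0 := by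
      intro m
      split
      · next h =>
        refine Finset.prod_eq_one fun i _ => ?_
        have hni : ¬ (m i ≤ a i) := by have := h i; omega
        simp [hψ, hni]
      · next h =>
        push_neg at h
        obtain ⟨i, hi⟩ := h
        have hle : m i ≤ a i := by omega
        refine Finset.prod_eq_zero (mem_univ i) ?_
        simp [hψ, hle]
    have hfilter : Finset.Icc (fun i => a i + 1) b
        = U.filter (fun m => ∀ i, a i + 1 ≤ m i) := by
      ext m
      simp only [Finset.mem_Icc, Finset.mem_filter, hU, Pi.le_def]
      constructor
      · rintro ⟨hl, hr⟩
        refine ⟨⟨fun i => ?_, hr⟩, hl⟩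
        have := hl i
        simp only [Pi.one_apply]
        omega
      · rintro ⟨⟨_, hr⟩, hP⟩
        exact ⟨hP, hr⟩
    rw [indicator_sum f U _ _ hfilter]
    exact Finset.sum_congr rfl fun m _ => by rw [hps m]
  -- Step 3: expand the product
  have step3 : ∀ m : Fin d → ℕ, (∏ i, (1 - ψ i m))
      = ∑ S ∈ (univ : Finset (Fin d)).powerset, (-1:ℝ) ^ S.card * ∏ i ∈ S, ψ i m := by
    intro m
    have h := Finset.prod_add (fun i => -ψ i m) (fun _ => (1:ℝ)) univ
    simp only [Finset.prod_const_one, mul_one] at h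
    have e0 : ∏ i, (1 - ψ i m) = ∏ i, (-ψ i m + 1) := by
      refine Finset.prod_congr rfl fun i _ => by ring
    rw [e0, h]
    refine Finset.sum_congr rfl fun S _ => ?_
    have : ∀ i ∈ S, -ψ i m = (-1) * ψ i m := fun i _ => by ring
    rw [Finset.prod_congr rfl this, Finset.prod_mul_distrib, Finset.prod_const]
  have rhs : ∑ S ∈ (univ : Finset (Fin d)).powerset,
      (-1 : ℝ) ^ S.card • ∑ m ∈ Finset.Icc 1 (fun i => if i ∈ S then a i else b i), f m
      = ∑ m ∈ U, (∑ S ∈ (univ : Finset (Fin d)).powerset,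
          ((-1:ℝ) ^ S.card * ∏ i ∈ S, ψ i m)) • f m := by
    have e1 : ∀ S ∈ (univ : Finset (Fin d)).powerset,
        (-1 : ℝ) ^ S.card • ∑ m ∈ Finset.Icc 1 (fun i => if i ∈ S then a i else b i), f m
          = ∑ m ∈ U, ((-1:ℝ) ^ S.card * ∏ i ∈ S, ψ i m) • f m := by
      intro S _
      rw [step1 S, Finset.smul_sum]
      exact Finset.sum_congr rfl fun m _ => (smul_smul _ _ _)
    rw [Finset.sum_congr rfl e1, Finset.sum_comm]
    exact Finset.sum_congr rfl fun m _ => (Finset.sum_smul).symm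
  rw [rhs, step2]
  exact Finset.sum_congr rfl fun m _ => by rw [step3 m]

theorem stmt11 {V : Type*} [NormedAddCommGroup V] [NormedSpace ℝ V]
    {d : ℕ} (v : (Fin d → ℕ) → V) (w : V)
    (hC : ∀ ε > (0:ℝ), ∃ L : ℕ, ∀ N : Fin d → ℕ, (∀ i, L < N i) →
      ‖((∏ i, N i : ℕ) : ℝ)⁻¹ • ∑ n ∈ Finset.Icc 1 N, v n - w‖ < ε)
    (α : ℝ) (hα : 0 < α)
    (hdiff : ∀ n : Fin d → ℕ, (∀ i, 1 ≤ n i) → ∀ i,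
      ‖v (Function.update n i (n i + 1)) - v n‖ < α / n i) :
    ∀ ε > (0:ℝ), ∃ L : ℕ, ∀ n : Fin d → ℕ, (∀ i, L < n i) → ‖v n - w‖ < ε := by
  intro ε hε
  classical
  set M : ℕ := ⌈4 * α * d / ε⌉₊ + 1 with hMdef
  have hM1 : 1 ≤ M := Nat.le_add_left 1 _
  have hM0 : (0:ℝ) < M := by exact_mod_cast Nat.lt_of_lt_of_le Nat.zero_lt_one hM1
  have hMbound : α * d / M ≤ ε / 4 := by
    have h1 : 4 * α * d / ε ≤ (M:ℝ) := by
      refine le_trans (Nat.le_ceil _) ?_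
      exact_mod_cast Nat.le_succ _
    rw [div_le_iff₀ hε] at h1
    rw [div_le_div_iff₀ hM0 (by norm_num : (0:ℝ) < 4)]
    nlinarith
  set ε' : ℝ := ε / (2 * (8 * M : ℝ) ^ d) with hε'def
  have h8M : (0:ℝ) < (8 * M : ℝ) ^ d := pow_pos (by linarith) d
  have hε' : 0 < ε' := div_pos hε (by positivity)
  obtain ⟨L₁, hL₁⟩ := hC ε' hε'
  refine ⟨max L₁ (2 * M), fun n hn => ?_⟩
  have hnL₁ : ∀ i, L₁ < n i := fun i => lt_of_le_of_lt (le_max_left _ _) (hn i)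
  have hn2M : ∀ i, 2 * M < n i := fun i => lt_of_le_of_lt (le_max_right _ _) (hn i)
  have hn1 : ∀ i, 1 ≤ n i := fun i => by have := hn2M i; omega
  have hn0 : ∀ i, (0:ℝ) < n i := fun i => by exact_mod_cast hn1 i
  set K : Fin d → ℕ := fun i => n i / M with hKdef
  have hKM : ∀ i, K i * M ≤ n i := fun i => Nat.div_mul_le_self _ _
  have hK1 : ∀ i, 1 ≤ K i := by
    intro i
    show 1 ≤ n i / M
    rw [Nat.le_div_iff_mul_le (by omega : 0 < M)]
    have := hn2M i; omega
  have hKn : ∀ i, K i ≤ n i := by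
    intro i
    have := hKM i
    have h2 : K i ≤ K i * M := Nat.le_mul_of_pos_right _ (by omega)
    omega
  have hn2MK : ∀ i, n i < 2 * (M * K i) := by
    intro i
    have h1 : M * K i + n i % M = n i := Nat.div_add_mod (n i) M
    have h2 : n i % M < M := Nat.mod_lt _ (by omega)
    have h3 : M * 1 ≤ M * K i := Nat.mul_le_mul_left _ (hK1 i)
    omega
  set b : Fin d → ℕ := fun i => n i + K i with hbdef
  have hnb : ∀ i, n i ≤ b i := fun i => Nat.le_add_right _ _
  have hb4MK : ∀ i, b i ≤ 4 * (M * K i) := by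
    intro i
    have h1 := hn2MK i
    have h2 := hKn i
    show n i + K i ≤ 4 * (M * K i)
    omega
  set B : Finset (Fin d → ℕ) := Finset.Icc (fun i => n i + 1) b with hBdef
  set W : ℕ := ∏ i, K i with hWdef
  have hW1 : 1 ≤ W := Finset.one_le_prod' fun i _ => hK1 i
  have hW0 : (0:ℝ) < W := by exact_mod_cast hW1
  have hcardB : B.card = W := by
    rw [hBdef, Pi.card_Icc, hWdef]
    refine Finset.prod_congr rfl fun i _ => ?_
    rw [Nat.card_Icc]
    show n i + K i + 1 - (n i + 1) = K i
    omega
  clear_value M ε' K b B W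
  -- decomposition
  have hdecomp : v n - w = (W:ℝ)⁻¹ • ∑ m ∈ B, ((v n - v m) + (v m - w)) := by
    have e1 : ∑ m ∈ B, ((v n - v m) + (v m - w)) = ∑ m ∈ B, (v n - w) :=
      Finset.sum_congr rfl fun m _ => by abel
    rw [e1, Finset.sum_const, hcardB, ← Nat.cast_smul_eq_nsmul ℝ, smul_smul,
      inv_mul_cancel₀ (ne_of_gt hW0), one_smul]
  -- term 1 bound
  have hvar : ∀ m ∈ B, ‖v n - v m‖ ≤ α * ∑ i, (K i : ℝ) / n i := by
    intro m hm
    rw [hBdef, Finset.mem_Icc] at hm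
    obtain ⟨hml, hmr⟩ := hm
    have hml' : ∀ i, n i ≤ m i := fun i => le_trans (Nat.le_succ _) (hml i)
    have hmr' : ∀ i, m i ≤ n i + K i := fun i => by simpa [hbdef] using hmr i
    rw [norm_sub_rev]
    refine le_trans (var_aux v α hα hdiff _ n m hn1 hml' rfl) ?_
    refine mul_le_mul_of_nonneg_left (Finset.sum_le_sum fun i _ => ?_) hα.le
    have hc : ((m i - n i : ℕ) : ℝ) ≤ (K i : ℝ) :=
      Nat.cast_le.mpr (by have := hmr' i; omega)
    gcongr
  have hterm1 : ‖∑ m ∈ B, (v n - v m)‖ ≤ (W:ℝ) * (ε / 4) := by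
    have hs : α * ∑ i, (K i : ℝ) / n i ≤ ε / 4 := by
      have each : ∀ i, (K i : ℝ) / n i ≤ 1 / M := by
        intro i
        rw [div_le_div_iff₀ (hn0 i) hM0, one_mul]
        exact_mod_cast hKM i
      calc α * ∑ i, (K i : ℝ) / n i
          ≤ α * ∑ _i : Fin d, (1 / M : ℝ) :=
            mul_le_mul_of_nonneg_left (Finset.sum_le_sum fun i _ => each i) hα.le
        _ = α * d / M := by
            rw [Finset.sum_const, Finset.card_univ, Fintype.card_fin, nsmul_eq_mul]
            ring
        _ ≤ ε / 4 := hMbound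
    calc ‖∑ m ∈ B, (v n - v m)‖ ≤ ∑ m ∈ B, ‖v n - v m‖ := norm_sum_le _ _
      _ ≤ ∑ m ∈ B, (α * ∑ i, (K i : ℝ) / n i) := Finset.sum_le_sum hvar
      _ = B.card * (α * ∑ i, (K i : ℝ) / n i) := by rw [Finset.sum_const, nsmul_eq_mul]
      _ = (W:ℝ) * (α * ∑ i, (K i : ℝ) / n i) := by rw [hcardB]
      _ ≤ (W:ℝ) * (ε / 4) := mul_le_mul_of_nonneg_left hs hW0.le
  -- term 2 bound
  have hterm2 : ‖∑ m ∈ B, (v m - w)‖ ≤ 2 ^ d * ((4 * M : ℝ) ^ d * W) * ε' := by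
    have hIE := incl_excl (fun m => v m - w) n b hn1 hnb
    rw [hBdef, hIE]
    have hSbound : ∀ S ∈ (univ : Finset (Fin d)).powerset,
        ‖(-1 : ℝ) ^ S.card •
          ∑ m ∈ Finset.Icc 1 (fun i => if i ∈ S then n i else b i), (v m - w)‖
        ≤ (4 * M : ℝ) ^ d * W * ε' := by
      intro S _
      set c : Fin d → ℕ := fun i => if i ∈ S then n i else b i with hcdef
      have hc1 : ∀ i, 1 ≤ c i := fun i => by
        show 1 ≤ if i ∈ S then n i else b i
        split
        · exact hn1 i
        · exact le_trans (hn1 i) (hnb i)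
      have hcL : ∀ i, L₁ < c i := fun i => by
        show L₁ < if i ∈ S then n i else b i
        split
        · exact hnL₁ i
        · exact lt_of_lt_of_le (hnL₁ i) (hnb i)
      set P : ℕ := ∏ i, c i with hPdef
      have hP1 : 1 ≤ P := Finset.one_le_prod' fun i _ => hc1 i
      have hP0 : (0:ℝ) < P := by exact_mod_cast hP1
      have hcard : (Finset.Icc (1 : Fin d → ℕ) c).card = P := by
        rw [Pi.card_Icc, hPdef]
        refine Finset.prod_congr rfl fun i _ => ?_
        rw [Nat.card_Icc, Pi.one_apply]
        have := hc1 i; omega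
      have hsum_split : ∑ m ∈ Finset.Icc (1 : Fin d → ℕ) c, (v m - w)
          = (∑ m ∈ Finset.Icc (1 : Fin d → ℕ) c, v m) - (P:ℝ) • w := by
        rw [Finset.sum_sub_distrib, Finset.sum_const, hcard, ← Nat.cast_smul_eq_nsmul ℝ]
      have hCbd := hL₁ c hcL
      have hnorm : ‖∑ m ∈ Finset.Icc (1 : Fin d → ℕ) c, (v m - w)‖ ≤ (P:ℝ) * ε' := by
        rw [hsum_split]
        have e2 : (∑ m ∈ Finset.Icc (1 : Fin d → ℕ) c, v m) - (P:ℝ) • w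
            = (P:ℝ) • ((P:ℝ)⁻¹ • ∑ m ∈ Finset.Icc (1 : Fin d → ℕ) c, v m - w) := by
          rw [smul_sub, smul_smul, mul_inv_cancel₀ (ne_of_gt hP0), one_smul]
        rw [e2, norm_smul, Real.norm_eq_abs, abs_of_pos hP0]
        exact mul_le_mul_of_nonneg_left hCbd.le hP0.le
      have hP_le : (P:ℝ) ≤ (4 * M : ℝ) ^ d * W := by
        have e3 : (P:ℝ) = ∏ i, (c i : ℝ) := by rw [hPdef]; push_cast; ring
        have e4 : (4 * M : ℝ) ^ d * W = ∏ i, ((4 * (M * K i) : ℕ) : ℝ) := by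
          rw [hWdef]
          push_cast
          have : ∀ i ∈ (univ : Finset (Fin d)), (4 * ((M:ℝ) * K i)) = (4 * M) * K i :=
            fun i _ => by ring
          rw [Finset.prod_congr rfl this, Finset.prod_mul_distrib, Finset.prod_const,
            Finset.card_univ, Fintype.card_fin]
        rw [e3, e4]
        refine Finset.prod_le_prod (fun i _ => by positivity) fun i _ => ?_
        have hcb : c i ≤ b i := by
          show (if i ∈ S then n i else b i) ≤ b i
          split
          · exact hnb i
          · exact le_refl _
        exact_mod_cast le_trans hcb (hb4MK i)
      rw [norm_smul, norm_pow, norm_neg, norm_one, one_pow, one_mul]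
      exact le_trans hnorm (mul_le_mul_of_nonneg_right hP_le hε'.le)
    calc ‖∑ S ∈ (univ : Finset (Fin d)).powerset, (-1 : ℝ) ^ S.card •
          ∑ m ∈ Finset.Icc 1 (fun i => if i ∈ S then n i else b i), (v m - w)‖
        ≤ ∑ S ∈ (univ : Finset (Fin d)).powerset, ((4 * M : ℝ) ^ d * W * ε') :=
          le_trans (norm_sum_le _ _) (Finset.sum_le_sum hSbound)
      _ = 2 ^ d * ((4 * M : ℝ) ^ d * W) * ε' := by
          rw [Finset.sum_const, Finset.card_powerset, Finset.card_univ, Fintype.card_fin,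
            nsmul_eq_mul]
          push_cast
          ring
  -- combine
  have hfinal : ‖v n - w‖ ≤ ε / 4 + ε / 2 := by
    rw [hdecomp, norm_smul, Real.norm_eq_abs, abs_of_pos (inv_pos.mpr hW0)]
    have hsplit : ‖∑ m ∈ B, ((v n - v m) + (v m - w))‖
        ≤ (W:ℝ) * (ε / 4) + 2 ^ d * ((4 * M : ℝ) ^ d * W) * ε' := by
      rw [Finset.sum_add_distrib]
      exact le_trans (norm_add_le _ _) (add_le_add hterm1 hterm2)
    have hWne : (W:ℝ) ≠ 0 := ne_of_gt hW0
    have h2pow : (2:ℝ) ^ d * (4 * M : ℝ) ^ d = (8 * M : ℝ) ^ d := by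
      rw [← mul_pow]
      congr 1
      ring
    have e5 : (W:ℝ)⁻¹ * ((W:ℝ) * (ε / 4) + 2 ^ d * ((4 * M : ℝ) ^ d * W) * ε')
        = ε / 4 + (8 * M : ℝ) ^ d * ε' := by
      rw [← h2pow]
      field_simp
    have e6 : (8 * M : ℝ) ^ d * ε' = ε / 2 := by
      rw [hε'def]
      field_simp
    calc (W:ℝ)⁻¹ * ‖∑ m ∈ B, ((v n - v m) + (v m - w))‖
        ≤ (W:ℝ)⁻¹ * ((W:ℝ) * (ε / 4) + 2 ^ d * ((4 * M : ℝ) ^ d * W) * ε') :=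
          mul_le_mul_of_nonneg_left hsplit (inv_pos.mpr hW0).le
      _ = ε / 4 + (8 * M : ℝ) ^ d * ε' := e5
      _ = ε / 4 + ε / 2 := by rw [e6]
  linarith
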